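/- Let F = F(a,b) be the free group of rank 2 on free generators a, b, let G = F × ℤ, and let H be the subgroup of G generated by the two elements (a, 0) and (b, 1). Then the intersection of H with F × {0} equals the subgroup of G generated by the set of all elements (b⁻ⁿ a bⁿ, 0) with n ∈ ℤ. -/

import Mathlib

namespace IntersectionAux

open FreeGroup Subgroup

/-- The subgroup of conjugates `b^{-n} a b^n` inside the free group. -/
def C : Subgroup (FreeGroup Bool) :=
  Subgroup.closure {g | ∃ n : ℤ,
    g = (FreeGroup.of false) ^ (-n) * FreeGroup.of true * (FreeGroup.of false) ^ n}

lemma gen_mem (n : ℤ) :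
    (FreeGroup.of false) ^ (-n) * FreeGroup.of true * (FreeGroup.of false) ^ n ∈ C :=
  Subgroup.subset_closure ⟨n, rfl⟩

lemma a_mem_C : FreeGroup.of true ∈ C := by
  have := gen_mem 0
  simpa using this

lemma conj_mem (g : FreeGroup Bool) : ∀ x ∈ C, g * x * g⁻¹ ∈ C := by
  induction g using FreeGroup.induction_on with
  | C1 => intro x hx; simpa using hx
  | of y =>
    intro x hx
    cases y with
    | true => exact mul_mem (mul_mem a_mem_C hx) (inv_mem a_mem_C)
    | false =>
      induction hx using Subgroup.closure_induction with
      | mem z hz =>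
        obtain ⟨n, rfl⟩ := hz
        have h := gen_mem (n - 1)
        have : (pure false : FreeGroup Bool) *
            ((FreeGroup.of false) ^ (-n) * FreeGroup.of true * (FreeGroup.of false) ^ n) *
            (pure false : FreeGroup Bool)⁻¹ =
            (FreeGroup.of false) ^ (-(n-1)) * FreeGroup.of true * (FreeGroup.of false) ^ (n-1) := by
          show (FreeGroup.of false) * _ * (FreeGroup.of false)⁻¹ = _
          group
        erw [this]; exact h
      | one => simpa using one_mem C
      | mul u v hu hv ihu ihv =>
        have : (pure false : FreeGroup Bool) * (u * v) * (pure false : FreeGroup Bool)⁻¹ =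
            ((pure false : FreeGroup Bool) * u * (pure false : FreeGroup Bool)⁻¹) *
            ((pure false : FreeGroup Bool) * v * (pure false : FreeGroup Bool)⁻¹) := by group
        erw [this]; exact mul_mem ihu ihv
      | inv u hu ihu =>
        have : (pure false : FreeGroup Bool) * u⁻¹ * (pure false : FreeGroup Bool)⁻¹ =
            ((pure false : FreeGroup Bool) * u * (pure false : FreeGroup Bool)⁻¹)⁻¹ := by group
        erw [this]; exact inv_mem ihu
  | inv_of y _ =>
    intro x hx
    cases y with
    | true =>
      simpa using mul_mem (mul_mem (inv_mem a_mem_C) hx) a_mem_C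
    | false =>
      induction hx using Subgroup.closure_induction with
      | mem z hz =>
        obtain ⟨n, rfl⟩ := hz
        have h := gen_mem (n + 1)
        have : (pure false : FreeGroup Bool)⁻¹ *
            ((FreeGroup.of false) ^ (-n) * FreeGroup.of true * (FreeGroup.of false) ^ n) *
            ((pure false : FreeGroup Bool)⁻¹)⁻¹ =
            (FreeGroup.of false) ^ (-(n+1)) * FreeGroup.of true * (FreeGroup.of false) ^ (n+1) := by
          show (FreeGroup.of false)⁻¹ * _ * ((FreeGroup.of false)⁻¹)⁻¹ = _
          group
        erw [this]; exact h
      | one => simpa using one_mem C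
      | mul u v hu hv ihu ihv =>
        have : (pure false : FreeGroup Bool)⁻¹ * (u * v) * ((pure false : FreeGroup Bool)⁻¹)⁻¹ =
            ((pure false : FreeGroup Bool)⁻¹ * u * ((pure false : FreeGroup Bool)⁻¹)⁻¹) *
            ((pure false : FreeGroup Bool)⁻¹ * v * ((pure false : FreeGroup Bool)⁻¹)⁻¹) := by group
        erw [this]; exact mul_mem ihu ihv
      | inv u hu ihu =>
        have : (pure false : FreeGroup Bool)⁻¹ * u⁻¹ * ((pure false : FreeGroup Bool)⁻¹)⁻¹ =
            ((pure false : FreeGroup Bool)⁻¹ * u * ((pure false : FreeGroup Bool)⁻¹)⁻¹)⁻¹ := by group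
        erw [this]; exact inv_mem ihu
  | mul u v ihu ihv =>
    intro x hx
    have : u * v * x * (u * v)⁻¹ = u * (v * x * v⁻¹) * u⁻¹ := by group
    rw [this]
    exact ihu _ (ihv _ hx)

instance C_normal : C.Normal := ⟨fun x hx g => conj_mem g x hx⟩

/-- The homomorphism `F(a,b) → ℤ` with `a ↦ 0`, `b ↦ 1`. -/
def f' : FreeGroup Bool →* Multiplicative ℤ :=
  FreeGroup.lift (fun x => if x then 1 else Multiplicative.ofAdd 1)

lemma ker_f'_le_C : f'.ker ≤ C := by
  have hN : Subgroup.normalClosure {(FreeGroup.of true : FreeGroup Bool)} ≤ C :=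
    Subgroup.normalClosure_le_normal (by
      intro x hx
      rw [Set.mem_singleton_iff] at hx
      subst hx
      exact a_mem_C)
  intro g hg
  apply hN
  set N := Subgroup.normalClosure {(FreeGroup.of true : FreeGroup Bool)} with hNdef
  have key : (QuotientGroup.mk' N) =
      ((zpowersHom _ (QuotientGroup.mk' N (FreeGroup.of false))).comp f') := by
    apply FreeGroup.ext_hom
    intro x
    cases x with
    | true =>
      have h1 : QuotientGroup.mk' N (FreeGroup.of true) = 1 :=
        (QuotientGroup.eq_one_iff _).mpr (Subgroup.subset_normalClosure rfl)
      simp [f', h1]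
    | false => simp [f']
  have hg1 : g ∈ (QuotientGroup.mk' N).ker := by
    rw [MonoidHom.mem_ker, key]
    simp [MonoidHom.mem_ker.mp hg]
  rwa [QuotientGroup.ker_mk'] at hg1

end IntersectionAux

/-- Let `F = F(a,b)` be the free group of rank 2 (on generators `a = of true`,
`b = of false`), `G = F × ℤ`, and `H ≤ G` the subgroup generated by `(a, 0)` and `(b, 1)`.
Then the intersection of `H` with `F × {0}` (the kernel of the projection `G → ℤ`) equals
the subgroup of `G` generated by all elements `(b⁻ⁿ a bⁿ, 0)` with `n ∈ ℤ`. -/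
theorem intersection_eq_closure_conjugates :
    (Subgroup.closure
        {(FreeGroup.of true, (1 : Multiplicative ℤ)),
         (FreeGroup.of false, Multiplicative.ofAdd (1 : ℤ))} ⊓
      MonoidHom.ker (MonoidHom.snd (FreeGroup Bool) (Multiplicative ℤ)))
    = Subgroup.closure
        {x : FreeGroup Bool × Multiplicative ℤ |
          ∃ n : ℤ, x = ((FreeGroup.of false) ^ (-n) * FreeGroup.of true *
            (FreeGroup.of false) ^ n, (1 : Multiplicative ℤ))} := by
  open IntersectionAux in
  apply le_antisymm
  · -- hard direction
    rintro ⟨g, z⟩ ⟨hH, hker⟩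
    have hz : z = 1 := MonoidHom.mem_ker.mp hker
    subst hz
    -- first: f' g = 1
    have hΦ : Subgroup.closure
        {((FreeGroup.of true, (1 : Multiplicative ℤ)) : FreeGroup Bool × Multiplicative ℤ),
         (FreeGroup.of false, Multiplicative.ofAdd (1 : ℤ))} ≤
        ((IntersectionAux.f'.comp (MonoidHom.fst (FreeGroup Bool) (Multiplicative ℤ))) *
          (MonoidHom.snd (FreeGroup Bool) (Multiplicative ℤ))⁻¹).ker := by
      rw [Subgroup.closure_le]
      rintro x (rfl | rfl) <;> simp [MonoidHom.mem_ker, IntersectionAux.f']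
    have hg : IntersectionAux.f' g = 1 := by
      have := hΦ hH
      simpa [MonoidHom.mem_ker] using this
    have hgC : g ∈ IntersectionAux.C := IntersectionAux.ker_f'_le_C hg
    -- map through inl
    have : ((g, (1 : Multiplicative ℤ)) : FreeGroup Bool × Multiplicative ℤ) ∈
        Subgroup.map (MonoidHom.inl (FreeGroup Bool) (Multiplicative ℤ)) IntersectionAux.C :=
      ⟨g, hgC, rfl⟩
    rw [IntersectionAux.C, MonoidHom.map_closure] at this
    refine Subgroup.closure_mono ?_ this
    rintro x ⟨y, ⟨n, rfl⟩, rfl⟩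
    exact ⟨n, rfl⟩
  · rw [Subgroup.closure_le]
    rintro x ⟨n, rfl⟩
    constructor
    · -- in H
      have hA : ((FreeGroup.of true, (1 : Multiplicative ℤ)) : FreeGroup Bool × Multiplicative ℤ) ∈
          Subgroup.closure {((FreeGroup.of true, (1 : Multiplicative ℤ)) : FreeGroup Bool × Multiplicative ℤ),
            (FreeGroup.of false, Multiplicative.ofAdd (1 : ℤ))} :=
        Subgroup.subset_closure (Set.mem_insert _ _)
      have hB : ((FreeGroup.of false, Multiplicative.ofAdd (1 : ℤ)) : FreeGroup Bool × Multiplicative ℤ) ∈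
          Subgroup.closure {((FreeGroup.of true, (1 : Multiplicative ℤ)) : FreeGroup Bool × Multiplicative ℤ),
            (FreeGroup.of false, Multiplicative.ofAdd (1 : ℤ))} :=
        Subgroup.subset_closure (Set.mem_insert_of_mem _ rfl)
      have heq : (((FreeGroup.of false) ^ (-n) * FreeGroup.of true * (FreeGroup.of false) ^ n,
            (1 : Multiplicative ℤ)) : FreeGroup Bool × Multiplicative ℤ) =
          ((FreeGroup.of false, Multiplicative.ofAdd (1 : ℤ)) : FreeGroup Bool × Multiplicative ℤ) ^ (-n) *
          (FreeGroup.of true, (1 : Multiplicative ℤ)) *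
          (FreeGroup.of false, Multiplicative.ofAdd (1 : ℤ)) ^ n := by
        ext
        · simp
        · show (1 : Multiplicative ℤ) = (Multiplicative.ofAdd (1:ℤ)) ^ (-n) * 1 * (Multiplicative.ofAdd (1:ℤ)) ^ n
          group
      rw [heq]
      exact mul_mem (mul_mem (zpow_mem hB _) hA) (zpow_mem hB _)
    · exact MonoidHom.mem_ker.mpr rfl
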